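/- arXiv:2103.06760 — 2 statements merged into one kernel-verified Lean document; each statement's English description precedes it below -/
import Mathlib

section
/- Let G be a 2-tough 2K_2-free graph with minimum-component 2-factor F having at least two cycles. At most two cycles of F fail to be AB-alternating (i.e., fail to alternate between A-type and B-type vertices). -/
open SimpleGraph

/-- A set of vertices is independent: no two of its members are adjacent. -/
def IsIndepSet {V : Type*} (G : SimpleGraph V) (s : Set V) : Prop :=
  ∀ x ∈ s, ∀ y ∈ s, ¬ G.Adj x y

/-- `G` contains no induced `2K₂`: there are no two disjoint edges with no
edge of `G` between them. -/
def TwoK2Free {V : Type*} (G : SimpleGraph V) : Prop :=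
  ¬ ∃ a b c d : V, G.Adj a b ∧ G.Adj c d ∧ a ≠ c ∧ a ≠ d ∧ b ≠ c ∧ b ≠ d ∧
    ¬ G.Adj a c ∧ ¬ G.Adj a d ∧ ¬ G.Adj b c ∧ ¬ G.Adj b d

/-- The independence number of `G`. -/
noncomputable def indepNum {V : Type*} [Fintype V] (G : SimpleGraph V) : ℕ :=
  sSup {n | ∃ s : Finset V, _root_.IsIndepSet G ↑s ∧ s.card = n}

/-- The number of connected components of a graph. -/
noncomputable def compCount {W : Type*} (H : SimpleGraph W) : ℕ :=
  Nat.card H.ConnectedComponent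

/-- `G` is `t`-tough: whenever removing a vertex set `S` disconnects the rest
into more than one component, `|S| ≥ t · ω(G − S)`. -/
def Tough {V : Type*} [Fintype V] (t : ℝ) (G : SimpleGraph V) : Prop :=
  ∀ S : Finset V,
    1 < compCount (G.induce ((↑S : Set V)ᶜ)) →
    t * compCount (G.induce ((↑S : Set V)ᶜ)) ≤ S.card

/-- An (oriented) `2`-factor of `G`, encoded as a permutation `σ` of the
vertices: each vertex is adjacent to its successor `σ x`, and every cycle of
`σ` has length at least `3`.  The cycles of `σ` are exactly the cycles of the
`2`-factor, with a fixed orientation; the successor of `x` is `σ x` and its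
predecessor is `σ⁻¹ x`. -/
def IsTwoFactor {V : Type*} (G : SimpleGraph V) (σ : Equiv.Perm V) : Prop :=
  ∀ x : V, G.Adj x (σ x) ∧ σ (σ x) ≠ x

/-- The number of components (cycles) of a `2`-factor encoded as a permutation. -/
noncomputable def numCycles {V : Type*} [Fintype V] (σ : Equiv.Perm V) : ℕ :=
  (@Equiv.Perm.cycleType V _ (Classical.decEq V) σ).card

/-- `σ` is a `2`-factor of `G` with the minimum number of components. -/
def IsMinTwoFactor {V : Type*} [Fintype V] (G : SimpleGraph V) (σ : Equiv.Perm V) : Prop :=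
  IsTwoFactor G σ ∧ ∀ τ : Equiv.Perm V, IsTwoFactor G τ → numCycles σ ≤ numCycles τ

/-- An (oriented) `2`-factor of `G − x`, encoded as a permutation of `V`
fixing `x`. -/
def IsTwoFactorAvoiding {V : Type*} (G : SimpleGraph V) (x : V) (σ' : Equiv.Perm V) : Prop :=
  σ' x = x ∧ ∀ y : V, y ≠ x → G.Adj y (σ' y) ∧ σ' (σ' y) ≠ y

/-- `x` is co-absorbable w.r.t. the `2`-factor `σ`: `G − x` has a `2`-factor
with strictly fewer components than `σ`. -/
def CoAbsorbable {V : Type*} [Fintype V] (G : SimpleGraph V) (σ : Equiv.Perm V) (x : V) : Prop :=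
  ∃ σ' : Equiv.Perm V, IsTwoFactorAvoiding G x σ' ∧ numCycles σ' < numCycles σ

/-- `x` is of `A`-type w.r.t. the `2`-factor `σ`: some other cycle of `σ`
contains two consecutive vertices `z`, `σ z` both adjacent to `x`. -/
def AType {V : Type*} (G : SimpleGraph V) (σ : Equiv.Perm V) (x : V) : Prop :=
  ∃ z : V, ¬ σ.SameCycle x z ∧ G.Adj x z ∧ G.Adj x (σ z)

/-- The degree of a vertex. -/
noncomputable def vdeg {V : Type*} (G : SimpleGraph V) (x : V) : ℕ :=
  Nat.card (G.neighborSet x)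

set_option linter.unusedSectionVars false

theorem Equiv.Perm.apply_inv_self {α : Type*} (f : Equiv.Perm α) (x : α) : f (f⁻¹ x) = x :=
  f.apply_symm_apply x

theorem Equiv.Perm.inv_apply_self {α : Type*} (f : Equiv.Perm α) (x : α) : f⁻¹ (f x) = x :=
  f.symm_apply_apply x

theorem Equiv.Perm.sameCycle_inv_apply_right {α : Type*} {f : Equiv.Perm α} {x y : α} :
    f.SameCycle x (f⁻¹ y) ↔ f.SameCycle x y :=
  Equiv.Perm.sameCycle_symm_apply_right

namespace Stmt11Aux

open Equiv Equiv.Perm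

variable {V : Type*} [Fintype V] {G : SimpleGraph V}

lemma sc_step (σ : Perm V) (a : V) : σ.SameCycle a (σ a) := ⟨1, by simp⟩

lemma w2 {σ τ : Perm V} {a b : V} (hab : σ.SameCycle a b)
    (hagree : ∀ c, σ.SameCycle a c → c ≠ b → c ≠ σ⁻¹ a → τ c = σ c) :
    τ.SameCycle a b := by
  classical
  obtain ⟨i, _, hib⟩ := hab.exists_pow_eq'
  have hex : ∃ n : ℕ, (σ ^ n) a = b := ⟨i, hib⟩
  set N := Nat.find hex with hNdef
  have hN : (σ ^ N) a = b := Nat.find_spec hex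
  have hmin : ∀ m, m < N → (σ ^ m) a ≠ b := fun m hm => Nat.find_min hex hm
  have key : ∀ j, j ≤ N → (τ ^ j) a = (σ ^ j) a := by
    intro j hj
    induction j with
    | zero => simp
    | succ k ih =>
      have hkN : k < N := hj
      have ihk := ih (Nat.le_of_lt hkN)
      have hsc : σ.SameCycle a ((σ ^ k) a) := ⟨(k : ℤ), by rw [zpow_natCast]⟩
      have hne1 : (σ ^ k) a ≠ b := hmin k hkN
      have hne2 : (σ ^ k) a ≠ σ⁻¹ a := by
        intro hEq
        have hper : (σ ^ (k + 1)) a = a := by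
          rw [pow_succ', Equiv.Perm.mul_apply, hEq, Equiv.Perm.apply_inv_self]
        have hfix : ∀ t : ℕ, (σ ^ ((k + 1) * t)) a = a := by
          intro t
          induction t with
          | zero => simp
          | succ s ihs =>
            rw [Nat.mul_succ, pow_add, Equiv.Perm.mul_apply, hper, ihs]
        have hmod : (σ ^ (N % (k + 1))) a = b := by
          have h1 : (σ ^ (N % (k + 1) + (k + 1) * (N / (k + 1)))) a = b := by
            rw [Nat.add_comm, Nat.div_add_mod]; exact hN
          rwa [pow_add, Equiv.Perm.mul_apply, hfix] at h1
        have hlt : N % (k + 1) < N :=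
          lt_of_lt_of_le (Nat.mod_lt _ (Nat.succ_pos k)) (Nat.succ_le_of_lt hkN)
        exact hmin _ hlt hmod
      have hag := hagree _ hsc hne1 hne2
      rw [pow_succ', Equiv.Perm.mul_apply, ihk, hag, ← Equiv.Perm.mul_apply, ← pow_succ']
  exact ⟨(N : ℤ), by rw [zpow_natCast, key N le_rfl, hN]⟩

lemma sc_mono {σ τ : Perm V} (h : ∀ a, τ.SameCycle a (σ a)) :
    ∀ {x y}, σ.SameCycle x y → τ.SameCycle x y := by
  have hn : ∀ (n : ℕ) (x : V), τ.SameCycle x ((σ ^ n) x) := by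
    intro n
    induction n with
    | zero => intro x; simpa using Equiv.Perm.SameCycle.refl τ x
    | succ k ih =>
      intro x
      have h1 := ih x
      have h2 := h ((σ ^ k) x)
      have h3 : (σ ^ (k + 1)) x = σ ((σ ^ k) x) := by rw [pow_succ', Equiv.Perm.mul_apply]
      rw [h3]; exact h1.trans h2
  rintro x y ⟨i, rfl⟩
  cases i with
  | ofNat n =>
    rw [Int.ofNat_eq_coe, zpow_natCast]; exact hn n x
  | negSucc n =>
    rw [zpow_negSucc]
    have h2 : (σ ^ (n + 1)) (((σ ^ (n + 1))⁻¹) x) = x := Equiv.Perm.apply_inv_self _ x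
    have h3 := hn (n + 1) (((σ ^ (n + 1))⁻¹) x)
    rw [h2] at h3
    exact h3.symm

lemma sc_small {τ : Perm V} {x y : V} (h2 : τ (τ x) = x) (h : τ.SameCycle x y) :
    y = x ∨ y = τ x := by
  have hinv : τ⁻¹ x = τ x := by
    have h3 := congrArg (⇑τ⁻¹) h2
    rw [Equiv.Perm.inv_apply_self] at h3; exact h3.symm
  have key : ∀ n : ℕ, ((τ ^ n) x = x ∨ (τ ^ n) x = τ x) ∧
      (((τ⁻¹) ^ n) x = x ∨ ((τ⁻¹) ^ n) x = τ x) := by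
    intro n; induction n with
    | zero => simp
    | succ k ih =>
      constructor
      · rcases ih.1 with h1 | h1
        · right; rw [pow_succ', Equiv.Perm.mul_apply, h1]
        · left; rw [pow_succ', Equiv.Perm.mul_apply, h1, h2]
      · rcases ih.2 with h1 | h1
        · right; rw [pow_succ', Equiv.Perm.mul_apply, h1, hinv]
        · left; rw [pow_succ', Equiv.Perm.mul_apply, h1]
          exact Equiv.Perm.inv_apply_self τ x
  obtain ⟨i, rfl⟩ := h
  cases i with
  | ofNat n => rw [Int.ofNat_eq_coe, zpow_natCast]; exact (key n).1
  | negSucc n => rw [zpow_negSucc, ← inv_pow]; exact (key (n + 1)).2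

lemma tfactor {σ τ : Perm V} (hσ : IsTwoFactor G σ)
    (h1 : ∀ a, τ.SameCycle a (σ a)) (hadj : ∀ a, G.Adj a (τ a)) : IsTwoFactor G τ := by
  intro x
  refine ⟨hadj x, ?_⟩
  intro hxx
  have h1x : τ.SameCycle x (σ x) := h1 x
  have h2x : τ.SameCycle x (σ (σ x)) := (h1 x).trans (h1 (σ x))
  have hx1 : σ x ≠ x := (hσ x).1.ne'
  have hx2 : σ (σ x) ≠ x := (hσ x).2
  rcases sc_small hxx h1x with a | a
  · exact hx1 a
  · rcases sc_small hxx h2x with b | b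
    · exact hx2 b
    · exact hx1 (σ.injective (a ▸ b : σ (σ x) = σ x))

def scSetoid (σ : Perm V) : Setoid V :=
  ⟨σ.SameCycle, ⟨fun x => Equiv.Perm.SameCycle.refl σ x, fun h => h.symm, fun h h' => h.trans h'⟩⟩

lemma numCycles_eq_card_quot (σ : Perm V) (hfpf : ∀ x, σ x ≠ x) :
    numCycles σ = Nat.card (Quotient (scSetoid σ)) := by
  classical
  have h1 : numCycles σ = (σ.cycleFactorsFinset).card := by
    unfold numCycles
    have h0 : @Equiv.Perm.cycleType V _ (Classical.decEq V) σ = σ.cycleType := by congr!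
    rw [h0, Equiv.Perm.cycleType_def, Multiset.card_map]
    rfl
  rw [h1]
  have hf : ∀ x : V, σ.cycleOf x ∈ σ.cycleFactorsFinset := fun x => by
    rw [Equiv.Perm.cycleOf_mem_cycleFactorsFinset_iff, Equiv.Perm.mem_support]; exact hfpf x
  let f : Quotient (scSetoid σ) → {c // c ∈ σ.cycleFactorsFinset} :=
    Quotient.lift (fun x => (⟨σ.cycleOf x, hf x⟩ : {c // c ∈ σ.cycleFactorsFinset}))
      (fun a b hab => Subtype.ext (Equiv.Perm.SameCycle.cycleOf_eq hab))
  have hbij : Function.Bijective f := by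
    constructor
    · intro q q'
      induction q using Quotient.ind
      induction q' using Quotient.ind
      rename_i a b
      intro hEq
      have hEq' : σ.cycleOf a = σ.cycleOf b := congrArg Subtype.val hEq
      have hb : b ∈ (σ.cycleOf b).support := by
        rw [Equiv.Perm.mem_support_cycleOf_iff]
        exact ⟨Equiv.Perm.SameCycle.refl σ b, Equiv.Perm.mem_support.2 (hfpf b)⟩
      rw [← hEq'] at hb
      exact Quotient.sound (Equiv.Perm.mem_support_cycleOf_iff.1 hb).1
    · rintro ⟨c, hc⟩
      have hcyc : c.IsCycle := (Equiv.Perm.mem_cycleFactorsFinset_iff.1 hc).1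
      obtain ⟨a, ha, -⟩ := hcyc
      have hca : c = σ.cycleOf a :=
        Equiv.Perm.cycle_is_cycleOf (Equiv.Perm.mem_support.2 ha) hc
      exact ⟨Quotient.mk _ a, Subtype.ext hca.symm⟩
  rw [Nat.card_eq_of_bijective f hbij, Nat.card_eq_finsetCard]

lemma merge_lt {σ τ : Perm V} (hσf : ∀ x, σ x ≠ x) (hτf : ∀ x, τ x ≠ x)
    (hmono : ∀ {x y}, σ.SameCycle x y → τ.SameCycle x y)
    {x y : V} (hxy : ¬ σ.SameCycle x y) (hτxy : τ.SameCycle x y) :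
    numCycles τ < numCycles σ := by
  classical
  rw [numCycles_eq_card_quot σ hσf, numCycles_eq_card_quot τ hτf]
  let f : Quotient (scSetoid σ) → Quotient (scSetoid τ) :=
    Quotient.lift (fun a => Quotient.mk (scSetoid τ) a)
      (fun a b h => Quotient.sound (hmono h))
  have hsurj : Function.Surjective f := by
    intro q
    induction q using Quotient.ind
    rename_i a
    exact ⟨Quotient.mk _ a, rfl⟩
  have hninj : ¬ Function.Injective f := by
    intro hinj
    exact hxy (Quotient.exact (hinj (Quotient.sound hτxy : f (Quotient.mk _ x) = f (Quotient.mk _ y))))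
  have hlt := Fintype.card_lt_of_surjective_not_injective f hsurj hninj
  rwa [Nat.card_eq_fintype_card, Nat.card_eq_fintype_card]

lemma merge_contra {σ τ : Perm V} (hσ : IsMinTwoFactor G σ)
    (h1 : ∀ a, τ.SameCycle a (σ a)) (hadj : ∀ a, G.Adj a (τ a))
    {x y : V} (hxy : ¬ σ.SameCycle x y) (hτxy : τ.SameCycle x y) : False := by
  have hτ2 : IsTwoFactor G τ := tfactor hσ.1 h1 hadj
  have hσf : ∀ x, σ x ≠ x := fun x => ((hσ.1 x).1).ne'
  have hτf : ∀ x, τ x ≠ x := fun x => ((hτ2 x).1).ne'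
  have hlt := merge_lt hσf hτf (fun {a b} h => sc_mono h1 h) hxy hτxy
  exact absurd (hσ.2 τ hτ2) (not_le.mpr hlt)


-- ### reversal
open scoped Classical in
noncomputable def revAt (σ : Perm V) (x₀ : V) : Perm V where
  toFun a := if σ.SameCycle x₀ a then σ⁻¹ a else σ a
  invFun a := if σ.SameCycle x₀ a then σ a else σ⁻¹ a
  left_inv := by
    intro a
    by_cases h : σ.SameCycle x₀ a
    · simp only [if_pos h]
      rw [if_pos ((Equiv.Perm.sameCycle_inv_apply_right).2 h), Equiv.Perm.apply_inv_self]
    · simp only [if_neg h]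
      rw [if_neg (fun hc => h ((Equiv.Perm.sameCycle_apply_right).1 hc)),
        Equiv.Perm.inv_apply_self]
  right_inv := by
    intro a
    by_cases h : σ.SameCycle x₀ a
    · simp only [if_pos h]
      rw [if_pos ((Equiv.Perm.sameCycle_apply_right).2 h), Equiv.Perm.inv_apply_self]
    · simp only [if_neg h]
      rw [if_neg (fun hc => h ((Equiv.Perm.sameCycle_inv_apply_right).1 hc)),
        Equiv.Perm.apply_inv_self]

lemma revAt_apply_mem {σ : Perm V} {x₀ a : V} (h : σ.SameCycle x₀ a) :
    revAt σ x₀ a = σ⁻¹ a := by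
  unfold revAt; simp only [Equiv.coe_fn_mk]; rw [if_pos h]

lemma revAt_apply_notMem {σ : Perm V} {x₀ a : V} (h : ¬ σ.SameCycle x₀ a) :
    revAt σ x₀ a = σ a := by
  unfold revAt; simp only [Equiv.coe_fn_mk]; rw [if_neg h]

lemma revAt_h1 (σ : Perm V) (x₀ : V) : ∀ a, (revAt σ x₀).SameCycle a (σ a) := by
  intro a
  by_cases h : σ.SameCycle x₀ a
  · have h2 : σ.SameCycle x₀ (σ a) := (Equiv.Perm.sameCycle_apply_right).2 h
    have h3 : revAt σ x₀ (σ a) = a := by rw [revAt_apply_mem h2, Equiv.Perm.inv_apply_self]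
    exact (h3 ▸ sc_step (revAt σ x₀) (σ a)).symm
  · exact (revAt_apply_notMem h) ▸ sc_step (revAt σ x₀) a

lemma revAt_h1' (σ : Perm V) (x₀ : V) : ∀ a, σ.SameCycle a ((revAt σ x₀) a) := by
  intro a
  by_cases h : σ.SameCycle x₀ a
  · rw [revAt_apply_mem h]; exact ⟨-1, by simp⟩
  · rw [revAt_apply_notMem h]; exact sc_step σ a

lemma revAt_sc_iff {σ : Perm V} {x₀ x y : V} :
    (revAt σ x₀).SameCycle x y ↔ σ.SameCycle x y :=
  ⟨fun h => sc_mono (revAt_h1' σ x₀) h, fun h => sc_mono (revAt_h1 σ x₀) h⟩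

lemma revAt_twoFactor {σ : Perm V} (hσ2 : IsTwoFactor G σ) (x₀ : V) :
    IsTwoFactor G (revAt σ x₀) := by
  apply tfactor hσ2 (revAt_h1 σ x₀)
  intro a
  by_cases h : σ.SameCycle x₀ a
  · rw [revAt_apply_mem h]
    have := (hσ2 (σ⁻¹ a)).1
    rwa [Equiv.Perm.apply_inv_self, SimpleGraph.adj_comm] at this
  · rw [revAt_apply_notMem h]; exact (hσ2 a).1

lemma revAt_numCycles {σ : Perm V} (hσ2 : IsTwoFactor G σ) (x₀ : V) :
    numCycles (revAt σ x₀) = numCycles σ := by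
  have hσf : ∀ x, σ x ≠ x := fun x => ((hσ2 x).1).ne'
  have hrf : ∀ x, (revAt σ x₀) x ≠ x := fun x => (((revAt_twoFactor hσ2 x₀) x).1).ne'
  rw [numCycles_eq_card_quot σ hσf, numCycles_eq_card_quot _ hrf]
  congr 1
  congr 1
  exact Setoid.ext fun x y => revAt_sc_iff

lemma revAt_min {σ : Perm V} (hσ : IsMinTwoFactor G σ) (x₀ : V) :
    IsMinTwoFactor G (revAt σ x₀) :=
  ⟨revAt_twoFactor hσ.1 x₀, fun τ hτ => (revAt_numCycles hσ.1 x₀) ▸ hσ.2 τ hτ⟩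

-- ### swap merge
lemma swap_merge {σ : Perm V} (hσ : IsMinTwoFactor G σ) {x y : V} (hxy : ¬ σ.SameCycle x y)
    (h1 : G.Adj x (σ y)) (h2 : G.Adj y (σ x)) : False := by
  classical
  have hne : x ≠ y := fun h => hxy (h ▸ Equiv.Perm.SameCycle.refl σ y)
  set τ := σ * Equiv.swap x y with hτdef
  have hτx : τ x = σ y := by
    simp [hτdef, Equiv.Perm.mul_apply, Equiv.swap_apply_left]
  have hτy : τ y = σ x := by
    simp [hτdef, Equiv.Perm.mul_apply, Equiv.swap_apply_right]
  have hτo : ∀ a, a ≠ x → a ≠ y → τ a = σ a := by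
    intro a hax hay
    simp [hτdef, Equiv.Perm.mul_apply, Equiv.swap_apply_of_ne_of_ne hax hay]
  have c1 : τ.SameCycle (σ y) y := by
    refine w2 (sc_step σ y).symm ?_
    intro c hsc hcb _
    refine hτo c (fun h => ?_) hcb
    subst h
    exact hxy (((sc_step σ y).trans hsc).symm)
  have c2 : τ.SameCycle (σ x) x := by
    refine w2 (sc_step σ x).symm ?_
    intro c hsc hcb _
    refine hτo c hcb (fun h => ?_)
    subst h
    exact hxy ((sc_step σ x).trans hsc)
  have sx : τ.SameCycle x (σ y) := hτx ▸ sc_step τ x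
  have sy : τ.SameCycle y (σ x) := hτy ▸ sc_step τ y
  have h1all : ∀ a, τ.SameCycle a (σ a) := by
    intro a
    by_cases hax : a = x
    · subst hax; exact (sx.trans c1).trans sy
    · by_cases hay : a = y
      · subst hay; exact (sy.trans c2).trans sx
      · exact (hτo a hax hay) ▸ sc_step τ a
  have hadj : ∀ a, G.Adj a (τ a) := by
    intro a
    by_cases hax : a = x
    · subst hax; rw [hτx]; exact h1
    · by_cases hay : a = y
      · subst hay; rw [hτy]; exact h2
      · rw [hτo a hax hay]; exact (hσ.1 a).1
  exact merge_contra hσ h1all hadj hxy (sx.trans c1)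

-- ### triangle merge
lemma tri_merge {σ : Perm V} (hσ : IsMinTwoFactor G σ) {u z w : V}
    (huz : ¬ σ.SameCycle u z) (huw : ¬ σ.SameCycle u w) (hzw : ¬ σ.SameCycle z w)
    (a1 : G.Adj u (σ z)) (a2 : G.Adj z (σ w)) (a3 : G.Adj w (σ u)) : False := by
  classical
  have hne_uz : u ≠ z := fun h => huz (h ▸ Equiv.Perm.SameCycle.refl σ z)
  have hne_uw : u ≠ w := fun h => huw (h ▸ Equiv.Perm.SameCycle.refl σ w)
  have hne_zw : z ≠ w := fun h => hzw (h ▸ Equiv.Perm.SameCycle.refl σ w)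
  set τ := σ * (Equiv.swap u w * Equiv.swap u z) with hτdef
  have hτu : τ u = σ z := by
    rw [hτdef]; simp only [Equiv.Perm.mul_apply, Equiv.swap_apply_left]
    rw [Equiv.swap_apply_of_ne_of_ne hne_uz.symm hne_zw]
  have hτz : τ z = σ w := by
    rw [hτdef]; simp only [Equiv.Perm.mul_apply, Equiv.swap_apply_right, Equiv.swap_apply_left]
  have hτw : τ w = σ u := by
    rw [hτdef]; simp only [Equiv.Perm.mul_apply]
    rw [Equiv.swap_apply_of_ne_of_ne hne_uw.symm hne_zw.symm, Equiv.swap_apply_right]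
  have hτo : ∀ a, a ≠ u → a ≠ z → a ≠ w → τ a = σ a := by
    intro a h1 h2 h3
    rw [hτdef]; simp only [Equiv.Perm.mul_apply]
    rw [Equiv.swap_apply_of_ne_of_ne h1 h2, Equiv.swap_apply_of_ne_of_ne h1 h3]
  have c1 : τ.SameCycle (σ z) z := by
    refine w2 (sc_step σ z).symm ?_
    intro c hsc hcb _
    have hcz : σ.SameCycle z c := (sc_step σ z).trans hsc
    refine hτo c (fun h => huz (h ▸ hcz).symm) hcb (fun h => hzw (h ▸ hcz))
  have c2 : τ.SameCycle (σ w) w := by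
    refine w2 (sc_step σ w).symm ?_
    intro c hsc hcb _
    have hcw : σ.SameCycle w c := (sc_step σ w).trans hsc
    refine hτo c (fun h => huw (h ▸ hcw).symm) (fun h => hzw (h ▸ hcw).symm) hcb
  have c3 : τ.SameCycle (σ u) u := by
    refine w2 (sc_step σ u).symm ?_
    intro c hsc hcb _
    have hcu : σ.SameCycle u c := (sc_step σ u).trans hsc
    refine hτo c hcb (fun h => huz (h ▸ hcu)) (fun h => huw (h ▸ hcu))
  have su : τ.SameCycle u (σ z) := hτu ▸ sc_step τ u
  have sz : τ.SameCycle z (σ w) := hτz ▸ sc_step τ z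
  have sw : τ.SameCycle w (σ u) := hτw ▸ sc_step τ w
  have h1all : ∀ a, τ.SameCycle a (σ a) := by
    intro a
    by_cases h1 : a = u
    · subst h1; exact (((su.trans c1).trans sz).trans c2).trans sw
    · by_cases h2 : a = z
      · subst h2; exact (((sz.trans c2).trans sw).trans c3).trans su
      · by_cases h3 : a = w
        · subst h3; exact (((sw.trans c3).trans su).trans c1).trans sz
        · exact (hτo a h1 h2 h3) ▸ sc_step τ a
  have hadj : ∀ a, G.Adj a (τ a) := by
    intro a
    by_cases h1 : a = u
    · subst h1; rw [hτu]; exact a1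
    · by_cases h2 : a = z
      · subst h2; rw [hτz]; exact a2
      · by_cases h3 : a = w
        · subst h3; rw [hτw]; exact a3
        · rw [hτo a h1 h2 h3]; exact (hσ.1 a).1
  exact merge_contra hσ h1all hadj huz (su.trans c1)

-- ### quad merge
lemma quad_merge {π : Perm V} (hσ : IsMinTwoFactor G π) {p r z w : V}
    (hr : π r = p)
    (hpz : ¬ π.SameCycle p z) (hzw : π.SameCycle z w) (hzwne : z ≠ w)
    (a1 : G.Adj p (π w)) (a2 : G.Adj w p) (a3 : G.Adj r (π z)) (a4 : G.Adj z (π p)) : False := by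
  classical
  have hrp : π.SameCycle r p := hr ▸ sc_step π r
  have hpw : ¬ π.SameCycle p w := fun h => hpz (h.trans hzw.symm)
  have hrz : ¬ π.SameCycle r z := fun h => hpz (hrp.symm.trans h)
  have hrw : ¬ π.SameCycle r w := fun h => hpw (hrp.symm.trans h)
  have hne_pr : p ≠ r := fun h => ((hσ.1 r).1).ne' (h ▸ hr)
  have hne_pz : p ≠ z := fun h => hpz (h ▸ Equiv.Perm.SameCycle.refl π z)
  have hne_pw : p ≠ w := fun h => hpw (h ▸ Equiv.Perm.SameCycle.refl π w)
  have hne_rz : r ≠ z := fun h => hrz (h ▸ Equiv.Perm.SameCycle.refl π z)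
  have hne_rw : r ≠ w := fun h => hrw (h ▸ Equiv.Perm.SameCycle.refl π w)
  -- ρ = swap p z * swap p r * swap p w : p ↦ w, w ↦ r, r ↦ z, z ↦ p
  set τ := π * (Equiv.swap p z * (Equiv.swap p r * Equiv.swap p w)) with hτdef
  have hτp : τ p = π w := by
    rw [hτdef]; simp only [Equiv.Perm.mul_apply, Equiv.swap_apply_left]
    rw [Equiv.swap_apply_of_ne_of_ne hne_pw.symm hne_rw.symm,
      Equiv.swap_apply_of_ne_of_ne hne_pw.symm hzwne.symm]
  have hτw : τ w = π r := by
    rw [hτdef]; simp only [Equiv.Perm.mul_apply, Equiv.swap_apply_right, Equiv.swap_apply_left]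
    rw [Equiv.swap_apply_of_ne_of_ne hne_pr.symm hne_rz]
  have hτr : τ r = π z := by
    rw [hτdef]; simp only [Equiv.Perm.mul_apply]
    rw [Equiv.swap_apply_of_ne_of_ne hne_pr.symm hne_rw, Equiv.swap_apply_right,
      Equiv.swap_apply_left]
  have hτz : τ z = π p := by
    rw [hτdef]; simp only [Equiv.Perm.mul_apply]
    rw [Equiv.swap_apply_of_ne_of_ne hne_pz.symm hzwne,
      Equiv.swap_apply_of_ne_of_ne hne_pz.symm hne_rz.symm, Equiv.swap_apply_right]
  have hτo : ∀ a, a ≠ p → a ≠ r → a ≠ z → a ≠ w → τ a = π a := by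
    intro a h1 h2 h3 h4
    rw [hτdef]; simp only [Equiv.Perm.mul_apply]
    rw [Equiv.swap_apply_of_ne_of_ne h1 h4, Equiv.swap_apply_of_ne_of_ne h1 h2,
      Equiv.swap_apply_of_ne_of_ne h1 h3]
  have c1 : τ.SameCycle (π w) z := by
    refine w2 ((Equiv.Perm.sameCycle_apply_left).2 hzw.symm) ?_
    intro c hsc hcb hcw
    have hwc : π.SameCycle w c := (sc_step π w).trans hsc
    refine hτo c (fun h => hpw (h ▸ hwc).symm) (fun h => hrw (h ▸ hwc).symm) hcb
      (fun h => hcw (by rw [h, Equiv.Perm.inv_apply_self]))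
  have c2 : τ.SameCycle (π z) w := by
    refine w2 ((Equiv.Perm.sameCycle_apply_left).2 hzw) ?_
    intro c hsc hcb hcz
    have hzc : π.SameCycle z c := (sc_step π z).trans hsc
    refine hτo c (fun h => hpz (h ▸ hzc).symm) (fun h => hrz (h ▸ hzc).symm)
      (fun h => hcz (by rw [h, Equiv.Perm.inv_apply_self])) hcb
  have c3 : τ.SameCycle (π p) r := by
    refine w2 ((Equiv.Perm.sameCycle_apply_left).2 hrp.symm) ?_
    intro c hsc hcb hcp
    have hpc : π.SameCycle p c := (sc_step π p).trans hsc
    refine hτo c (fun h => hcp (by rw [h, Equiv.Perm.inv_apply_self])) hcb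
      (fun h => hpz (h ▸ hpc)) (fun h => hpw (h ▸ hpc))
  have sp : τ.SameCycle p (π w) := hτp ▸ sc_step τ p
  have sw : τ.SameCycle w (π r) := hτw ▸ sc_step τ w
  have sr : τ.SameCycle r (π z) := hτr ▸ sc_step τ r
  have sz : τ.SameCycle z (π p) := hτz ▸ sc_step τ z
  have sw' : τ.SameCycle w p := by rw [← hr]; exact sw
  have h1all : ∀ a, τ.SameCycle a (π a) := by
    intro a
    by_cases h1 : a = p
    · rw [h1]; exact (sp.trans c1).trans sz
    · by_cases h2 : a = r
      · rw [h2]; exact (sr.trans c2).trans sw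
      · by_cases h3 : a = z
        · rw [h3]; exact (sz.trans c3).trans sr
        · by_cases h4 : a = w
          · rw [h4]; exact sw'.trans sp
          · exact (hτo a h1 h2 h3 h4) ▸ sc_step τ a
  have hadj : ∀ a, G.Adj a (τ a) := by
    intro a
    by_cases h1 : a = p
    · rw [h1, hτp]; exact a1
    · by_cases h2 : a = r
      · rw [h2, hτr]; exact a3
      · by_cases h3 : a = z
        · rw [h3, hτz]; exact a4
        · by_cases h4 : a = w
          · rw [h4, hτw, hr]; exact a2
          · rw [hτo a h1 h2 h3 h4]; exact (hσ.1 a).1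
  exact merge_contra hσ h1all hadj hpz (sp.trans c1)

-- ### LM' (reversed swap merge)
lemma lm' {σ : Perm V} (hσ : IsMinTwoFactor G σ) {x y : V} (hxy : ¬ σ.SameCycle x y)
    (h1 : G.Adj x y) (h2 : G.Adj (σ x) (σ y)) : False := by
  classical
  set π := revAt σ y with hπdef
  have hπ : IsMinTwoFactor G π := revAt_min hσ y
  have hmem : σ.SameCycle y (σ y) := sc_step σ y
  have hval1 : π (σ y) = y := by
    rw [hπdef, revAt_apply_mem hmem, Equiv.Perm.inv_apply_self]
  have hval2 : π x = σ x := by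
    rw [hπdef, revAt_apply_notMem (fun h => hxy h.symm)]
  apply swap_merge hπ (x := x) (y := σ y)
  · rw [hπdef]
    intro h
    exact hxy ((Equiv.Perm.sameCycle_apply_right).1 (revAt_sc_iff.1 h))
  · rw [hval1]; exact h1
  · rw [hval2]; exact h2.symm


lemma no_AA (h2 : TwoK2Free G) {σ : Perm V} (hσ : IsMinTwoFactor G σ) {u : V}
    (hA : AType G σ u) (hA' : AType G σ (σ u)) : False := by
  obtain ⟨z, hzsc, hz1, hz2⟩ := hA
  obtain ⟨w, hwsc, hw1, hw2⟩ := hA'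
  have hσ2 := hσ.1
  have huv : σ.SameCycle u (σ u) := sc_step σ u
  have huvv : σ.SameCycle u (σ (σ u)) := huv.trans (sc_step σ (σ u))
  have hwscu : ¬ σ.SameCycle u w := fun h => hwsc (huv.symm.trans h)
  have hzv : ¬ σ.SameCycle (σ u) z := fun h => hzsc (huv.trans h)
  have hzvv : ¬ σ.SameCycle (σ (σ u)) z := fun h => hzsc (huvv.trans h)
  have hwv : ¬ σ.SameCycle (σ u) w := fun h => hwscu (huv.trans h)
  by_cases hzw : σ.SameCycle z w
  · -- same witness cycle
    by_cases e1 : z = w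
    · subst e1; exact lm' hσ hzsc hz1 hw2
    by_cases e2 : σ z = w
    · exact lm' hσ hzsc hz1 (by rw [e2]; exact hw1)
    by_cases e3 : z = σ w
    · exact swap_merge hσ hwscu (by rw [← e3]; exact hz1) hw1.symm
    have hd1 : σ u ≠ z := fun h => hzv (h ▸ Equiv.Perm.SameCycle.refl σ z)
    have hd2 : σ u ≠ σ z := fun h =>
      hzv ((Equiv.Perm.sameCycle_apply_right).1 (h ▸ Equiv.Perm.SameCycle.refl σ (σ z)))
    have hd3 : σ (σ u) ≠ z := fun h => hzvv (h ▸ Equiv.Perm.SameCycle.refl σ z)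
    have hd4 : σ (σ u) ≠ σ z := fun h =>
      hzvv ((Equiv.Perm.sameCycle_apply_right).1 (h ▸ Equiv.Perm.SameCycle.refl σ (σ z)))
    have cross : G.Adj (σ u) z ∨ G.Adj (σ u) (σ z) ∨ G.Adj (σ (σ u)) z ∨
        G.Adj (σ (σ u)) (σ z) := by
      by_contra hno
      push_neg at hno
      exact h2 ⟨σ u, σ (σ u), z, σ z, (hσ2 (σ u)).1, (hσ2 z).1, hd1, hd2, hd3, hd4,
        hno.1, hno.2.1, hno.2.2.1, hno.2.2.2⟩
    rcases cross with hc | hc | hc | hc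
    · exact swap_merge hσ hzsc hz2 hc.symm
    · exact lm' hσ hzsc hz1 hc
    · -- QUAD #2 : reverse cycle of u, then cycle of z
      set π₁ := revAt σ u with hπ₁def
      set π₂ := revAt π₁ z with hπ₂def
      have hπ₂min : IsMinTwoFactor G π₂ := revAt_min (revAt_min hσ u) z
      have hscπ₁ : ∀ {x y : V}, π₁.SameCycle x y ↔ σ.SameCycle x y := fun {x y} =>
        revAt_sc_iff
      have hsc12 : ∀ {x y : V}, π₂.SameCycle x y ↔ σ.SameCycle x y := fun {x y} =>
        revAt_sc_iff.trans revAt_sc_iff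
      have hπ₁v : π₁ (σ u) = u := by
        rw [hπ₁def, revAt_apply_mem huv, Equiv.Perm.inv_apply_self]
      have hπ₁vv : π₁ (σ (σ u)) = σ u := by
        rw [hπ₁def, revAt_apply_mem huvv, Equiv.Perm.inv_apply_self]
      have hπ₁w : π₁ w = σ w := by rw [hπ₁def, revAt_apply_notMem hwscu]
      have hπ₁z : π₁ z = σ z := by rw [hπ₁def, revAt_apply_notMem hzsc]
      have hπ₂vv : π₂ (σ (σ u)) = σ u := by
        rw [hπ₂def, revAt_apply_notMem (fun h => hzvv (hscπ₁.1 h).symm), hπ₁vv]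
      have hπ₂sw : π₂ (σ w) = w := by
        have hmem : π₁.SameCycle z (σ w) :=
          hscπ₁.2 ((Equiv.Perm.sameCycle_apply_right).2 hzw)
        rw [hπ₂def, revAt_apply_mem hmem, ← hπ₁w, Equiv.Perm.inv_apply_self]
      have hπ₂sz : π₂ (σ z) = z := by
        have hmem : π₁.SameCycle z (σ z) := hscπ₁.2 (sc_step σ z)
        rw [hπ₂def, revAt_apply_mem hmem, ← hπ₁z, Equiv.Perm.inv_apply_self]
      have hπ₂v : π₂ (σ u) = u := by
        rw [hπ₂def, revAt_apply_notMem (fun h => hzv (hscπ₁.1 h).symm), hπ₁v]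
      refine quad_merge (G := G) hπ₂min (p := σ u) (r := σ (σ u)) (z := σ z) (w := σ w)
        hπ₂vv ?_ ?_ (fun h => e1 (σ.injective h)) ?_ ?_ ?_ ?_
      · exact fun h => hzv ((Equiv.Perm.sameCycle_apply_right).1 (hsc12.1 h))
      · exact hsc12.2
          ((Equiv.Perm.sameCycle_apply_left).2 ((Equiv.Perm.sameCycle_apply_right).2 hzw))
      · rw [hπ₂sw]; exact hw1
      · exact hw2.symm
      · rw [hπ₂sz]; exact hc
      · rw [hπ₂v]; exact hz2.symm
    · -- QUAD #1 : reverse cycle of u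
      set π₁ := revAt σ u with hπ₁def
      have hπ₁min : IsMinTwoFactor G π₁ := revAt_min hσ u
      have hπ₁v : π₁ (σ u) = u := by
        rw [hπ₁def, revAt_apply_mem huv, Equiv.Perm.inv_apply_self]
      have hπ₁vv : π₁ (σ (σ u)) = σ u := by
        rw [hπ₁def, revAt_apply_mem huvv, Equiv.Perm.inv_apply_self]
      have hπ₁w : π₁ w = σ w := by rw [hπ₁def, revAt_apply_notMem hwscu]
      have hπ₁z : π₁ z = σ z := by rw [hπ₁def, revAt_apply_notMem hzsc]
      refine quad_merge (G := G) hπ₁min (p := σ u) (r := σ (σ u)) (z := z) (w := w)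
        hπ₁vv ?_ ?_ e1 ?_ ?_ ?_ ?_
      · rw [revAt_sc_iff]; exact hzv
      · rw [revAt_sc_iff]; exact hzw
      · rw [hπ₁w]; exact hw2
      · exact hw1.symm
      · rw [hπ₁z]; exact hc
      · rw [hπ₁v]; exact hz1.symm
  · -- different witness cycles
    have k1 : z ≠ w := fun h => hzw (h ▸ Equiv.Perm.SameCycle.refl σ w)
    have k2 : z ≠ σ w := fun h =>
      hzw ((Equiv.Perm.sameCycle_apply_right).1 (h ▸ Equiv.Perm.SameCycle.refl σ (σ w)))
    have k3 : σ z ≠ w := fun h => hzw (h ▸ sc_step σ z)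
    have k4 : σ z ≠ σ w := fun h => k1 (σ.injective h)
    have hscz : ¬ σ.SameCycle u (σ z) :=
      fun h => hzsc ((Equiv.Perm.sameCycle_apply_right).1 h)
    have hscw : ¬ σ.SameCycle u (σ w) :=
      fun h => hwscu ((Equiv.Perm.sameCycle_apply_right).1 h)
    have hzw2 : ¬ σ.SameCycle (σ z) (σ w) := fun h =>
      hzw ((Equiv.Perm.sameCycle_apply_right).1 ((Equiv.Perm.sameCycle_apply_left).1 h))
    have hzw3 : ¬ σ.SameCycle z (σ w) :=
      fun h => hzw ((Equiv.Perm.sameCycle_apply_right).1 h)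
    have hzw4 : ¬ σ.SameCycle (σ z) w :=
      fun h => hzw ((Equiv.Perm.sameCycle_apply_left).1 h)
    have cross : G.Adj z w ∨ G.Adj z (σ w) ∨ G.Adj (σ z) w ∨ G.Adj (σ z) (σ w) := by
      by_contra hno
      push_neg at hno
      exact h2 ⟨z, σ z, w, σ w, (hσ2 z).1, (hσ2 w).1, k1, k2, k3, k4,
        hno.1, hno.2.1, hno.2.2.1, hno.2.2.2⟩
    have hwz : ¬ σ.SameCycle w z := fun h => hzw h.symm
    have hwu : ¬ σ.SameCycle w u := fun h => hwscu h.symm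
    have hzu : ¬ σ.SameCycle z u := fun h => hzsc h.symm
    rcases cross with hc | hc | hc | hc
    · -- Adj z w : reverse cycle of w
      set π := revAt σ w with hπdef
      have hπmin : IsMinTwoFactor G π := revAt_min hσ w
      have hv1 : π z = σ z := by rw [hπdef, revAt_apply_notMem hwz]
      have hv2 : π (σ w) = w := by
        rw [hπdef, revAt_apply_mem (sc_step σ w), Equiv.Perm.inv_apply_self]
      have hv3 : π u = σ u := by rw [hπdef, revAt_apply_notMem hwu]
      refine tri_merge (G := G) hπmin (u := u) (z := z) (w := σ w) ?_ ?_ ?_ ?_ ?_ ?_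
      · rw [revAt_sc_iff]; exact hzsc
      · rw [revAt_sc_iff]; exact hscw
      · rw [revAt_sc_iff]; exact hzw3
      · rw [hv1]; exact hz2
      · rw [hv2]; exact hc
      · rw [hv3]; exact hw2.symm
    · exact tri_merge hσ hzsc hwscu hzw hz2 hc hw1.symm
    · -- Adj (σ z) w : reverse cycle of z and cycle of w
      set π₁ := revAt σ z with hπ₁def
      set π₂ := revAt π₁ w with hπ₂def
      have hπ₂min : IsMinTwoFactor G π₂ := revAt_min (revAt_min hσ z) w
      have hπ₁sz : π₁ (σ z) = z := by
        rw [hπ₁def, revAt_apply_mem (sc_step σ z), Equiv.Perm.inv_apply_self]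
      have hπ₁w : π₁ w = σ w := by rw [hπ₁def, revAt_apply_notMem hzw]
      have hπ₁u : π₁ u = σ u := by rw [hπ₁def, revAt_apply_notMem hzu]
      have hw_sz : ¬ π₁.SameCycle w (σ z) := by
        rw [revAt_sc_iff]
        exact fun h => hzw4 h.symm
      have hw_u : ¬ π₁.SameCycle w u := by rw [revAt_sc_iff]; exact hwu
      have hv1 : π₂ (σ z) = z := by
        rw [hπ₂def, revAt_apply_notMem hw_sz, hπ₁sz]
      have hv2 : π₂ (σ w) = w := by
        have hmem : π₁.SameCycle w (σ w) := by
          rw [revAt_sc_iff]; exact sc_step σ w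
        rw [hπ₂def, revAt_apply_mem hmem, ← hπ₁w, Equiv.Perm.inv_apply_self]
      have hv3 : π₂ u = σ u := by
        rw [hπ₂def, revAt_apply_notMem hw_u, hπ₁u]
      refine tri_merge (G := G) hπ₂min (u := u) (z := σ z) (w := σ w) ?_ ?_ ?_ ?_ ?_ ?_
      · rw [revAt_sc_iff, revAt_sc_iff]; exact hscz
      · rw [revAt_sc_iff, revAt_sc_iff]; exact hscw
      · rw [revAt_sc_iff, revAt_sc_iff]; exact hzw2
      · rw [hv1]; exact hz1
      · rw [hv2]; exact hc
      · rw [hv3]; exact hw2.symm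
    · -- Adj (σ z) (σ w) : reverse cycle of z
      set π := revAt σ z with hπdef
      have hπmin : IsMinTwoFactor G π := revAt_min hσ z
      have hv1 : π (σ z) = z := by
        rw [hπdef, revAt_apply_mem (sc_step σ z), Equiv.Perm.inv_apply_self]
      have hv2 : π w = σ w := by rw [hπdef, revAt_apply_notMem hzw]
      have hv3 : π u = σ u := by rw [hπdef, revAt_apply_notMem hzu]
      refine tri_merge (G := G) hπmin (u := u) (z := σ z) (w := w) ?_ ?_ ?_ ?_ ?_ ?_
      · rw [revAt_sc_iff]; exact hscz
      · rw [revAt_sc_iff]; exact hwscu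
      · rw [revAt_sc_iff]; exact hzw4
      · rw [hv1]; exact hz1
      · rw [hv2]; exact hc
      · rw [hv3]; exact hw1.symm


lemma exists_notSameCycle {σ : Perm V} (hσ2 : IsTwoFactor G σ) (hcyc : 1 < numCycles σ)
    (u : V) : ∃ x, ¬ σ.SameCycle u x := by
  classical
  by_contra h
  push_neg at h
  have hfpf : ∀ x, σ x ≠ x := fun x => ((hσ2 x).1).ne'
  have hq := numCycles_eq_card_quot σ hfpf
  have hsub : Subsingleton (Quotient (scSetoid σ)) := by
    constructor
    intro a b
    induction a using Quotient.ind
    induction b using Quotient.ind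
    rename_i a b
    exact Quotient.sound ((h a).symm.trans (h b))
  have hle : numCycles σ ≤ 1 := by
    rw [hq, Nat.card_eq_fintype_card]
    exact Fintype.card_le_one_iff_subsingleton.2 hsub
  omega

lemma compCount_indep {s : Set V} (hs : _root_.IsIndepSet G s) :
    compCount (G.induce s) = Nat.card s := by
  unfold compCount
  symm
  apply Nat.card_eq_of_bijective (f := fun a : s => (G.induce s).connectedComponentMk a)
  constructor
  · intro a b hab
    have hr := SimpleGraph.ConnectedComponent.exact hab
    obtain ⟨p⟩ := hr
    cases p with
    | nil => rfl
    | cons h q => exact absurd h (hs a.1 a.2 _ (Subtype.coe_prop _))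
  · intro c
    induction c using SimpleGraph.ConnectedComponent.ind
    rename_i v
    exact ⟨v, rfl⟩

lemma bb_bound (h2 : TwoK2Free G) (ht : Tough 2 G) {σ : Perm V} (hσ : IsMinTwoFactor G σ)
    (hcyc : 1 < numCycles σ) {u : V} (hu : ¬ AType G σ u) (hv : ¬ AType G σ (σ u)) :
    Fintype.card V + 6 ≤ 3 * Nat.card {x : V // σ.SameCycle u x} := by
  classical
  set v := σ u with hvdef
  have hadjuv : G.Adj u v := (hσ.1 u).1
  set T : Finset V :=
    Finset.univ.filter (fun x => x ≠ u ∧ x ≠ v ∧ ¬ G.Adj u x ∧ ¬ G.Adj v x) with hTdef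
  have hTmem : ∀ x, x ∈ T ↔ x ≠ u ∧ x ≠ v ∧ ¬ G.Adj u x ∧ ¬ G.Adj v x := by
    intro x; simp [hTdef]
  have cover : ∀ x : V, ¬ σ.SameCycle u x →
      (¬ G.Adj u x ∧ ¬ G.Adj v x) ∨ (¬ G.Adj u (σ x) ∧ ¬ G.Adj v (σ x)) := by
    intro x hx
    by_contra hcon
    push_neg at hcon
    obtain ⟨h1, h2''⟩ := hcon
    have ha : G.Adj u x ∨ G.Adj v x := (em (G.Adj u x)).elim Or.inl fun h => Or.inr (h1 h)
    have hb : G.Adj u (σ x) ∨ G.Adj v (σ x) :=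
      (em (G.Adj u (σ x))).elim Or.inl fun h => Or.inr (h2'' h)
    rcases ha with ha | ha <;> rcases hb with hb | hb
    · exact hu ⟨x, hx, ha, hb⟩
    · exact lm' hσ hx ha hb
    · exact swap_merge hσ hx hb ha.symm
    · exact hv ⟨x, fun h => hx ((sc_step σ u).trans h), ha, hb⟩
  have hTind : _root_.IsIndepSet G (↑(T ∪ {u}) : Set V) := by
    intro x hx y hy hadj
    have hx' : x = u ∨ x ∈ T := by simpa using hx
    have hy' : y = u ∨ y ∈ T := by simpa using hy
    rcases hx' with hxu | hxT
    · rcases hy' with hyu | hyT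
      · rw [hxu, hyu] at hadj; exact G.loopless.irrefl u hadj
      · obtain ⟨_, _, hy3, _⟩ := (hTmem y).1 hyT
        rw [hxu] at hadj; exact hy3 hadj
    · rcases hy' with hyu | hyT
      · obtain ⟨_, _, hx3, _⟩ := (hTmem x).1 hxT
        rw [hyu] at hadj; exact hx3 hadj.symm
      · obtain ⟨hx1, hx2, hx3, hx4⟩ := (hTmem x).1 hxT
        obtain ⟨hy1, hy2, hy3, hy4⟩ := (hTmem y).1 hyT
        exact h2 ⟨u, v, x, y, hadjuv, hadj, Ne.symm hx1, Ne.symm hy1, Ne.symm hx2, Ne.symm hy2,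
          hx3, hy3, hx4, hy4⟩
  have huT : u ∉ T := fun h => ((hTmem u).1 h).1 rfl
  have hdisj : Disjoint T ({u} : Finset V) := by
    rw [Finset.disjoint_singleton_right]; exact huT
  have hcomp : compCount (G.induce (↑(T ∪ {u}) : Set V)) = T.card + 1 := by
    rw [compCount_indep hTind, Nat.card_coe_set_eq, Set.ncard_coe_finset,
      Finset.card_union_of_disjoint hdisj, Finset.card_singleton]
  set U : Finset V := Finset.univ.filter (fun x => ¬ σ.SameCycle u x) with hUdef
  have hUmem : ∀ x, x ∈ U ↔ ¬ σ.SameCycle u x := by intro x; simp [hUdef]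
  have hUtoT : ∀ x ∈ U, x ∈ T ∨ σ x ∈ T := by
    intro x hxU
    have hx := (hUmem x).1 hxU
    have hxu : x ≠ u := fun h => hx (h ▸ Equiv.Perm.SameCycle.refl σ u)
    have hxv : x ≠ v := fun h => hx (h ▸ sc_step σ u)
    have hsxu : σ x ≠ u := fun h =>
      hx ((h ▸ sc_step σ x : σ.SameCycle x u)).symm
    have hsxv : σ x ≠ v := fun h => hxu (σ.injective h)
    rcases cover x hx with ⟨ha, hb⟩ | ⟨ha, hb⟩
    · exact Or.inl ((hTmem x).2 ⟨hxu, hxv, ha, hb⟩)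
    · exact Or.inr ((hTmem (σ x)).2 ⟨hsxu, hsxv, ha, hb⟩)
  have hinj : (U \ T).card ≤ T.card := by
    apply Finset.card_le_card_of_injOn (fun x => σ x)
    · intro x hxx
      rw [Finset.mem_coe, Finset.mem_sdiff] at hxx
      rcases hUtoT x hxx.1 with h | h
      · exact absurd h hxx.2
      · exact h
    · exact fun a _ b _ h => σ.injective h
  have hUcard : U.card ≤ 2 * T.card := by
    have heq := Finset.card_sdiff_add_card_inter U T
    have h2' : (U ∩ T).card ≤ T.card := Finset.card_le_card Finset.inter_subset_right
    omega
  have hTne : T.Nonempty := by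
    obtain ⟨x, hx⟩ := exists_notSameCycle hσ.1 hcyc u
    have hxU : x ∈ U := (hUmem x).2 hx
    rcases hUtoT x hxU with h | h
    exacts [⟨x, h⟩, ⟨σ x, h⟩]
  set S : Finset V := Finset.univ \ (T ∪ {u}) with hSdef
  have hSc : ((↑S : Set V)ᶜ) = (↑(T ∪ {u}) : Set V) := by
    ext x
    simp only [hSdef, Finset.coe_sdiff, Finset.coe_univ, Set.mem_compl_iff, Set.mem_diff,
      Set.mem_univ, true_and, Finset.mem_coe, Finset.coe_union, Finset.coe_singleton,
      Set.mem_union, Set.mem_singleton_iff, not_not]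
  have htough := ht S
  rw [hSc, hcomp] at htough
  have hone : (1 : ℕ) < T.card + 1 := by
    have := Finset.card_pos.2 hTne; omega
  have hreal := htough hone
  have hnat : 2 * (T.card + 1) ≤ S.card := by exact_mod_cast hreal
  have hcardTu : (T ∪ {u}).card = T.card + 1 := by
    rw [Finset.card_union_of_disjoint hdisj, Finset.card_singleton]
  have hle : T.card + 1 ≤ Fintype.card V := by
    rw [← hcardTu, ← Finset.card_univ]
    exact Finset.card_le_univ _
  have hScard : S.card + (T.card + 1) = Fintype.card V := by
    rw [hSdef, Finset.card_sdiff_of_subset (Finset.subset_univ _), Finset.card_univ, hcardTu]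
    exact Nat.sub_add_cancel hle
  have hC : Nat.card {x : V // σ.SameCycle u x}
      = (Finset.univ.filter (fun x => σ.SameCycle u x)).card := by
    rw [Nat.card_eq_fintype_card, Fintype.card_subtype]
  have hsplit : (Finset.univ.filter (fun x => σ.SameCycle u x)).card + U.card
      = Fintype.card V := by
    rw [hUdef, Finset.card_filter_add_card_filter_not, Finset.card_univ]
  rw [hC]
  omega

end Stmt11Aux

open Stmt11Aux in
theorem stmt11 {V : Type*} [Fintype V] (G : SimpleGraph V) (h2 : TwoK2Free G)
    (ht : Tough 2 G) (σ : Equiv.Perm V) (hσ : IsMinTwoFactor G σ)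
    (hcyc : 1 < numCycles σ) :
    ∃ x₁ x₂ : V, ∀ y : V,
      ¬ (AType G σ y ↔ ¬ AType G σ (σ y)) →
      σ.SameCycle x₁ y ∨ σ.SameCycle x₂ y := by
  classical
  have hnoAA : ∀ y : V, ¬ (AType G σ y ↔ ¬ AType G σ (σ y)) →
      ¬ AType G σ y ∧ ¬ AType G σ (σ y) := by
    intro y hy
    by_cases hA : AType G σ y
    · by_cases hA' : AType G σ (σ y)
      · exact (no_AA h2 hσ hA hA').elim
      · exact absurd ⟨fun _ => hA', fun _ => hA⟩ hy
    · by_cases hA' : AType G σ (σ y)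
      · exact absurd ⟨fun h => (hA h).elim, fun hn => (hn hA').elim⟩ hy
      · exact ⟨hA, hA'⟩
  have hne : Nonempty V := by
    by_contra hempty
    rw [not_nonempty_iff] at hempty
    have hσ1 : σ = 1 := Equiv.ext fun x => hempty.elim x
    have h0 : numCycles σ = 0 := by
      unfold numCycles
      have hinst : @Equiv.Perm.cycleType V _ (Classical.decEq V) σ = σ.cycleType := by congr!
      rw [hinst, hσ1, Equiv.Perm.cycleType_one]
      rfl
    omega
  by_cases hB : ∃ y, ¬ (AType G σ y ↔ ¬ AType G σ (σ y))
  · obtain ⟨y₁, hy₁⟩ := hB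
    by_cases hB2 : ∃ y, (¬ (AType G σ y ↔ ¬ AType G σ (σ y))) ∧ ¬ σ.SameCycle y₁ y
    · obtain ⟨y₂, hy₂, hsc12⟩ := hB2
      refine ⟨y₁, y₂, fun y hy => ?_⟩
      by_contra hcon
      push_neg at hcon
      obtain ⟨hd1, hd2⟩ := hcon
      obtain ⟨ha1, hb1⟩ := hnoAA y₁ hy₁
      obtain ⟨ha2, hb2⟩ := hnoAA y₂ hy₂
      obtain ⟨ha3, hb3⟩ := hnoAA y hy
      have q1 := bb_bound h2 ht hσ hcyc ha1 hb1
      have q2 := bb_bound h2 ht hσ hcyc ha2 hb2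
      have q3 := bb_bound h2 ht hσ hcyc ha3 hb3
      set C1 := Finset.univ.filter (fun x => σ.SameCycle y₁ x) with hC1
      set C2 := Finset.univ.filter (fun x => σ.SameCycle y₂ x) with hC2
      set C3 := Finset.univ.filter (fun x => σ.SameCycle y x) with hC3
      have e1 : Nat.card {x : V // σ.SameCycle y₁ x} = C1.card := by
        rw [Nat.card_eq_fintype_card, Fintype.card_subtype]
      have e2 : Nat.card {x : V // σ.SameCycle y₂ x} = C2.card := by
        rw [Nat.card_eq_fintype_card, Fintype.card_subtype]
      have e3 : Nat.card {x : V // σ.SameCycle y x} = C3.card := by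
        rw [Nat.card_eq_fintype_card, Fintype.card_subtype]
      rw [e1] at q1; rw [e2] at q2; rw [e3] at q3
      have d12 : Disjoint C1 C2 := by
        rw [Finset.disjoint_left]
        intro a haa hab
        rw [hC1, Finset.mem_filter] at haa
        rw [hC2, Finset.mem_filter] at hab
        exact hsc12 (haa.2.trans hab.2.symm)
      have d13 : Disjoint C1 C3 := by
        rw [Finset.disjoint_left]
        intro a haa hab
        rw [hC1, Finset.mem_filter] at haa
        rw [hC3, Finset.mem_filter] at hab
        exact hd1 (haa.2.trans hab.2.symm)
      have d23 : Disjoint C2 C3 := by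
        rw [Finset.disjoint_left]
        intro a haa hab
        rw [hC2, Finset.mem_filter] at haa
        rw [hC3, Finset.mem_filter] at hab
        exact hd2 (haa.2.trans hab.2.symm)
      have hcard := Finset.card_le_univ (C1 ∪ C2 ∪ C3)
      rw [Finset.card_union_of_disjoint (Finset.disjoint_union_left.2 ⟨d13, d23⟩),
        Finset.card_union_of_disjoint d12] at hcard
      omega
    · push_neg at hB2
      exact ⟨y₁, y₁, fun y hy => Or.inl (hB2 y (Or.inr (hnoAA y hy)))⟩
  · push_neg at hB
    exact ⟨Classical.arbitrary V, Classical.arbitrary V, fun y hy => absurd (hB y) hy⟩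
end

section
/- Let G be a graph with a 2-factor F of minimum number of components, x a vertex of G, and F' a 2-factor of G − x with ω(F') < ω(F). Let N(x)⁺ be the set of successors (on the cycles of F', with fixed orientations) of neighbors of x. Then N(x)⁺ ∪ {x} is an independent set in G. -/
open SimpleGraph

private lemma myAdjFormPerm {α : Type*} [DecidableEq α] {R : α → α → Prop} {L : List α}
    (hN : L.Nodup) (hne : L ≠ [])
    (hchain : List.Chain' R L) (hlast : R (L.getLast hne) (L.head hne)) :
    ∀ z ∈ L, R z (L.formPerm z) := by
  intro z hz
  obtain ⟨i, hi, rfl⟩ := List.getElem_of_mem hz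
  rw [List.formPerm_apply_getElem _ hN]
  rcases lt_or_ge (i + 1) L.length with h | h
  · simp only [Nat.mod_eq_of_lt h]
    have := List.isChain_iff_getElem.mp hchain i (by omega)
    simpa using this
  · have hi1 : i + 1 = L.length := by omega
    have h2 : (i + 1) % L.length = 0 := by rw [hi1, Nat.mod_self]
    simp only [h2]
    have e0 : L.head hne = L[0] := List.head_eq_getElem_zero hne
    have e1 : L.getLast hne = L[L.length - 1] := List.getLast_eq_getElem _
    have e2 : L[i] = L.getLast hne := by rw [e1]; congr 1; omega
    rw [e2, ← e0]
    exact hlast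

section helpers

open Equiv Equiv.Perm List

variable {V : Type*} [Fintype V] [DecidableEq V] {G : SimpleGraph V} {σ' : Equiv.Perm V} {x : V}

private lemma myNotMemToList (hfix : σ' x = x) {w : V} (hw : w ≠ x) : x ∉ σ'.toList w := by
  rw [Equiv.Perm.mem_toList_iff]
  rintro ⟨⟨i, hi⟩, -⟩
  exact hw ((σ' ^ i).injective
    (hi.trans (Equiv.Perm.zpow_apply_eq_self_of_apply_eq_self hfix i).symm))

private lemma myGetElemToList (σ' : Equiv.Perm V) (w : V) (i : ℕ)
    (hi : i < (σ'.toList w).length) : (σ'.toList w)[i] = (σ' ^ i) w := by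
  simpa using Equiv.Perm.getElem_toList (p := σ') (x := w) i hi

private lemma myChainToList (hG : ∀ y : V, y ≠ x → G.Adj y (σ' y)) (hfix : σ' x = x)
    {w : V} (hw : w ≠ x) : List.Chain' G.Adj (σ'.toList w) := by
  rw [List.Chain', List.isChain_iff_getElem]
  intro i hi
  rw [myGetElemToList, myGetElemToList]
  rw [pow_succ', Equiv.Perm.mul_apply]
  apply hG
  intro hxe
  exact hw ((σ' ^ i).injective
    (hxe.trans (Equiv.Perm.pow_apply_eq_self_of_apply_eq_self hfix i).symm))

private lemma myHeadToList (w : V) (h : σ'.toList w ≠ []) :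
    (σ'.toList w).head h = w := by
  rw [List.head_eq_getElem_zero, myGetElemToList]
  simp

private lemma myApplyGetLastToList (w : V) (h : σ'.toList w ≠ []) :
    σ' ((σ'.toList w).getLast h) = w := by
  have hmem : (σ'.toList w).getLast h ∈ σ'.toList w := List.getLast_mem h
  have hsc : σ'.SameCycle w ((σ'.toList w).getLast h) :=
    (Equiv.Perm.mem_toList_iff.mp hmem).1
  have h1 : σ'.cycleOf w ((σ'.toList w).getLast h) = σ' ((σ'.toList w).getLast h) :=
    hsc.cycleOf_apply
  rw [← h1, ← Equiv.Perm.formPerm_toList]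
  rw [List.getLast_eq_getElem, List.formPerm_apply_getElem _ (Equiv.Perm.nodup_toList σ' w)]
  have hlen : (σ'.toList w).length ≠ 0 := by simpa using h
  simp only [Nat.sub_add_cancel (Nat.one_le_iff_ne_zero.mpr hlen), Nat.mod_self]
  rw [myGetElemToList]
  simp

private lemma myClosedToList (w z : V) (hz : z ∈ σ'.toList w) : σ' z ∈ σ'.toList w := by
  rw [Equiv.Perm.mem_toList_iff] at hz ⊢
  exact ⟨hz.1.apply_right, hz.2⟩

end helpers

private lemma myNumCyclesCycleType {V : Type*} [Fintype V] [inst : DecidableEq V]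
    (f : Equiv.Perm V) : numCycles f = f.cycleType.card := by
  unfold numCycles
  rw [Subsingleton.elim (Classical.decEq V) inst]

private lemma myNumCycles {V : Type*} [Fintype V] [inst : DecidableEq V] (f : Equiv.Perm V) :
    numCycles f = f.cycleFactorsFinset.card := by
  rw [myNumCyclesCycleType, Equiv.Perm.cycleType_def, Multiset.card_map]
  rfl

private lemma myKey {V : Type*} [Fintype V] [DecidableEq V] (G : SimpleGraph V)
    (σ σ' : Equiv.Perm V) (hσ : IsMinTwoFactor G σ) (x : V)
    (h' : IsTwoFactorAvoiding G x σ') (hlt : numCycles σ' < numCycles σ)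
    (L : List V) (hN : L.Nodup) (hxL : x ∈ L) (hlen : 3 ≤ L.length)
    (hclosed : ∀ z ∈ L, σ' z ∈ L)
    (hadj : ∀ z ∈ L, G.Adj z (L.formPerm z)) : False := by
  obtain ⟨hfix, hmf⟩ := h'
  have hmove : ∀ y : V, y ≠ x → σ' y ≠ y := by
    intro y hy h
    exact (hmf y hy).2 (by rw [h, h])
  have hInv : ∀ z : V, z ∉ L → σ' z ∉ L := by
    intro z hz hsz
    have himg : L.toFinset.image σ' = L.toFinset := by
      apply Finset.eq_of_subset_of_card_le
      · intro w hw
        obtain ⟨u, hu, rfl⟩ := Finset.mem_image.mp hw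
        exact List.mem_toFinset.mpr (hclosed u (List.mem_toFinset.mp hu))
      · rw [Finset.card_image_of_injective _ σ'.injective]
    have h1 : σ' z ∈ L.toFinset := List.mem_toFinset.mpr hsz
    rw [← himg] at h1
    obtain ⟨u, hu, he⟩ := Finset.mem_image.mp h1
    have : u = z := σ'.injective he
    subst this
    exact hz (List.mem_toFinset.mp hu)
  have hInv' : ∀ z : V, z ∉ L → σ'⁻¹ z ∉ L := by
    intro z hz h1
    have h2 := hclosed _ h1
    rw [Equiv.Perm.inv_def, Equiv.apply_symm_apply] at h2
    exact hz h2
  let ρ : Equiv.Perm V :=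
    ⟨fun z => if z ∈ L then z else σ' z, fun z => if z ∈ L then z else σ'⁻¹ z,
      fun z => by
        by_cases hz : z ∈ L
        · simp [hz]
        · simp only [if_neg hz, if_neg (hInv z hz), Equiv.Perm.inv_def, Equiv.symm_apply_apply]
      , fun z => by
        by_cases hz : z ∈ L
        · simp [hz]
        · simp only [if_neg hz, if_neg (hInv' z hz)]; exact Equiv.apply_symm_apply σ' z⟩
  have hρ1 : ∀ z ∈ L, ρ z = z := fun z hz => if_pos hz
  have hρ2 : ∀ z ∉ L, ρ z = σ' z := fun z hz => if_neg hz
  set τ : Equiv.Perm V := L.formPerm * ρ with hτ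
  have hτL : ∀ z ∈ L, τ z = L.formPerm z := by
    intro z hz; rw [hτ, Equiv.Perm.mul_apply, hρ1 z hz]
  have hτout : ∀ z ∉ L, τ z = σ' z := by
    intro z hz
    rw [hτ, Equiv.Perm.mul_apply, hρ2 z hz, List.formPerm_apply_of_notMem (hInv z hz)]
  have hc : (L.formPerm).IsCycle := List.isCycle_formPerm hN (by omega)
  have hlen1 : ∀ y : V, L ≠ [y] := by
    intro y hy; rw [hy] at hlen; simp at hlen
  have hsupp : (L.formPerm).support = L.toFinset := List.support_formPerm_of_nodup L hN hlen1
  have htf : IsTwoFactor G τ := by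
    intro z
    by_cases hz : z ∈ L
    · constructor
      · rw [hτL z hz]; exact hadj z hz
      · rw [hτL z hz, hτL _ (List.formPerm_apply_mem_of_mem hz)]
        intro h2
        have hne : L.formPerm z ≠ z := by
          rw [List.formPerm_apply_mem_ne_self_iff _ hN _ hz]; omega
        have hpow : L.formPerm ^ 2 = 1 :=
          hc.pow_eq_one_iff.mpr ⟨z, hne, by simpa [pow_succ, Equiv.Perm.mul_apply] using h2⟩
        have hdvd : orderOf (L.formPerm) ∣ 2 := orderOf_dvd_of_pow_eq_one hpow
        rw [hc.orderOf, hsupp, List.toFinset_card_of_nodup hN] at hdvd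
        have := Nat.le_of_dvd (by norm_num) hdvd
        omega
    · have hzx : z ≠ x := fun h => hz (h ▸ hxL)
      constructor
      · rw [hτout z hz]; exact (hmf z hzx).1
      · rw [hτout z hz, hτout _ (hInv z hz)]; exact (hmf z hzx).2
  have hdisj : (L.formPerm).Disjoint ρ := by
    intro z
    by_cases hz : z ∈ L
    · exact Or.inr (hρ1 z hz)
    · exact Or.inl (List.formPerm_apply_of_notMem hz)
  have hsub : ρ.cycleFactorsFinset ⊂ σ'.cycleFactorsFinset := by
    constructor
    · intro c hcmem
      rw [Equiv.Perm.mem_cycleFactorsFinset_iff] at hcmem ⊢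
      refine ⟨hcmem.1, fun a ha => ?_⟩
      have h1 := hcmem.2 a ha
      have haL : a ∉ L := by
        intro haL
        rw [hρ1 a haL] at h1
        exact (Equiv.Perm.mem_support.mp ha) h1
      rw [h1, hρ2 a haL]
    · intro hss
      obtain ⟨y₀, hy₀L, hy₀x⟩ : ∃ z ∈ L, z ≠ x := by
        have h0 : L[0] ∈ L := List.getElem_mem (by omega)
        have h1 : L[1] ∈ L := List.getElem_mem (by omega)
        by_cases h : L[0] = x
        · refine ⟨L[1], h1, fun e => ?_⟩
          rw [← h] at e
          have := (List.Nodup.getElem_inj_iff hN).mp e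
          omega
        · exact ⟨L[0], h0, h⟩
      have hy₀ : σ' y₀ ≠ y₀ := hmove y₀ hy₀x
      have hmem : σ'.cycleOf y₀ ∈ σ'.cycleFactorsFinset :=
        Equiv.Perm.cycleOf_mem_cycleFactorsFinset_iff.mpr (Equiv.Perm.mem_support.mpr hy₀)
      have h2 := hss hmem
      rw [Equiv.Perm.mem_cycleFactorsFinset_iff] at h2
      have h3 : y₀ ∈ (σ'.cycleOf y₀).support :=
        Equiv.Perm.mem_support_cycleOf_iff.mpr
          ⟨Equiv.Perm.SameCycle.refl _ _, Equiv.Perm.mem_support.mpr hy₀⟩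
      have h4 := h2.2 y₀ h3
      rw [Equiv.Perm.cycleOf_apply_self, hρ1 y₀ hy₀L] at h4
      exact hy₀ h4
  have hcard : ρ.cycleFactorsFinset.card < σ'.cycleFactorsFinset.card :=
    Finset.card_lt_card hsub
  have h5 : numCycles τ = 1 + numCycles ρ := by
    rw [myNumCyclesCycleType τ, myNumCyclesCycleType ρ, hτ, Equiv.Perm.Disjoint.cycleType_mul hdisj,
      Multiset.card_add, hc.cycleType]
    simp
  have h6 : numCycles ρ < numCycles σ' := by
    rw [myNumCycles ρ, myNumCycles σ']; exact hcard
  have h7 := hσ.2 τ htf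
  omega

private lemma myCase1 {V : Type*} [Fintype V] [DecidableEq V] (G : SimpleGraph V)
    (σ σ' : Equiv.Perm V) (hσ : IsMinTwoFactor G σ) (x : V)
    (h' : IsTwoFactorAvoiding G x σ') (hlt : numCycles σ' < numCycles σ)
    (y : V) (hxy : G.Adj x y) (hxsy : G.Adj x (σ' y)) : False := by
  obtain ⟨hfix, hmf⟩ := h'
  have hyx : y ≠ x := hxy.ne'
  have hsyx : σ' y ≠ x := fun h => hyx (σ'.injective (h.trans hfix.symm))
  have hmove : ∀ z : V, z ≠ x → σ' z ≠ z := fun z hz h => (hmf z hz).2 (by rw [h, h])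
  have hsupp : σ' y ∈ σ'.support := Equiv.Perm.mem_support.mpr (hmove _ hsyx)
  set l := σ'.toList (σ' y) with hl
  have hlnN : l.Nodup := Equiv.Perm.nodup_toList σ' (σ' y)
  have hllen : 2 ≤ l.length := Equiv.Perm.two_le_length_toList_iff_mem_support.mpr hsupp
  have hlne : l ≠ [] := by intro h; rw [h] at hllen; simp at hllen
  have hxl : x ∉ l := myNotMemToList hfix hsyx
  have hN : (x :: l).Nodup := List.nodup_cons.mpr ⟨hxl, hlnN⟩
  have hhead : l.head hlne = σ' y := myHeadToList _ hlne
  have hlasty : l.getLast hlne = y := σ'.injective (myApplyGetLastToList _ hlne)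
  have hchain : List.Chain' G.Adj (x :: l) := by
    rw [List.Chain', List.isChain_cons]
    refine ⟨?_, myChainToList (fun z hz => (hmf z hz).1) hfix hsyx⟩
    intro w hw
    rw [List.head?_eq_head hlne, Option.mem_some_iff] at hw
    rw [← hw, hhead]
    exact hxsy
  apply myKey G σ σ' hσ x ⟨hfix, hmf⟩ hlt (x :: l) hN List.mem_cons_self
    (by simp only [List.length_cons]; omega) ?_ ?_
  · intro z hz
    rcases List.mem_cons.mp hz with rfl | hz2
    · rw [hfix]; exact List.mem_cons_self
    · exact List.mem_cons_of_mem _ (myClosedToList _ _ hz2)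
  · apply myAdjFormPerm hN (List.cons_ne_nil _ _) hchain
    have h1 : (x :: l).getLast (List.cons_ne_nil _ _) = y := by
      rw [List.getLast_cons hlne]; exact hlasty
    rw [h1]
    simpa using hxy.symm

private lemma myCase2Build {V : Type*} [Fintype V] [DecidableEq V] (G : SimpleGraph V)
    (σ σ' : Equiv.Perm V) (hσ : IsMinTwoFactor G σ) (x : V)
    (h' : IsTwoFactorAvoiding G x σ') (hlt : numCycles σ' < numCycles σ)
    (l₁ l₂ : List V) (h₁ne : l₁ ≠ []) (h₂ne : l₂ ≠ [])
    (hN : (l₁ ++ l₂).Nodup) (hx : x ∉ l₁ ++ l₂)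
    (hclosed : ∀ z ∈ l₁ ++ l₂, σ' z ∈ l₁ ++ l₂)
    (hc₁ : List.Chain' G.Adj l₁) (hc₂ : List.Chain' G.Adj l₂)
    (hjun : G.Adj (l₁.head h₁ne) (l₂.head h₂ne))
    (hstart : G.Adj x (l₁.getLast h₁ne))
    (hend : G.Adj (l₂.getLast h₂ne) x) : False := by
  have h₁rne : l₁.reverse ≠ [] := by simpa using h₁ne
  have hane : l₁.reverse ++ l₂ ≠ [] := by
    intro h; rw [List.append_eq_nil_iff] at h; exact h₂ne h.2
  have hperm : (l₁.reverse ++ l₂).Perm (l₁ ++ l₂) := (l₁.reverse_perm).append_right l₂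
  have hNL : (x :: (l₁.reverse ++ l₂)).Nodup := by
    rw [List.nodup_cons]
    exact ⟨fun hmem => hx (hperm.mem_iff.mp hmem), hperm.nodup_iff.mpr hN⟩
  have hchain : List.Chain' G.Adj (x :: (l₁.reverse ++ l₂)) := by
    rw [List.Chain', List.isChain_cons]
    constructor
    · intro w hw
      rw [List.head?_eq_head hane, Option.mem_some_iff] at hw
      rw [← hw, List.head_append_of_ne_nil h₁rne, List.head_reverse]
      exact hstart
    · rw [List.isChain_append]
      refine ⟨?_, hc₂, ?_⟩
      · rw [List.isChain_reverse]
        exact hc₁.imp (fun {a b} h => h.symm)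
      · intro a ha b hb
        rw [List.getLast?_reverse, List.head?_eq_head h₁ne, Option.mem_some_iff] at ha
        rw [List.head?_eq_head h₂ne, Option.mem_some_iff] at hb
        rw [← ha, ← hb]
        exact hjun
  apply myKey G σ σ' hσ x h' hlt (x :: (l₁.reverse ++ l₂)) hNL
    List.mem_cons_self ?_ ?_ ?_
  · have e1 : 1 ≤ l₁.length := List.length_pos_iff.mpr h₁ne
    have e2 : 1 ≤ l₂.length := List.length_pos_iff.mpr h₂ne
    simp only [List.length_cons, List.length_append, List.length_reverse]
    omega
  · intro z hz
    rw [List.mem_cons] at hz ⊢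
    rcases hz with rfl | hz2
    · exact Or.inl h'.1
    · exact Or.inr (hperm.mem_iff.mpr (hclosed z (hperm.mem_iff.mp hz2)))
  · apply myAdjFormPerm hNL (List.cons_ne_nil _ _) hchain
    have h1 : (x :: (l₁.reverse ++ l₂)).getLast (List.cons_ne_nil _ _) = l₂.getLast h₂ne := by
      rw [List.getLast_cons hane, List.getLast_append_of_ne_nil _ h₂ne]
    rw [h1]
    simpa using hend

private lemma myCase2 {V : Type*} [Fintype V] [DecidableEq V] (G : SimpleGraph V)
    (σ σ' : Equiv.Perm V) (hσ : IsMinTwoFactor G σ) (x : V)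
    (h' : IsTwoFactorAvoiding G x σ') (hlt : numCycles σ' < numCycles σ)
    (y₁ y₂ : V) (h1 : G.Adj x y₁) (h2 : G.Adj x y₂)
    (hE : G.Adj (σ' y₁) (σ' y₂)) : False := by
  obtain ⟨hfix, hmf⟩ := h'
  have hmove : ∀ z : V, z ≠ x → σ' z ≠ z := fun z hz h => (hmf z hz).2 (by rw [h, h])
  have hy₁x : y₁ ≠ x := h1.ne'
  have hy₂x : y₂ ≠ x := h2.ne'
  have hsy₁x : σ' y₁ ≠ x := fun h => hy₁x (σ'.injective (h.trans hfix.symm))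
  have hsy₂x : σ' y₂ ≠ x := fun h => hy₂x (σ'.injective (h.trans hfix.symm))
  have hy₁y₂ : y₁ ≠ y₂ := fun h => hE.ne (by rw [h])
  have hsupp₁ : σ' y₁ ∈ σ'.support := Equiv.Perm.mem_support.mpr (hmove _ hsy₁x)
  have hsupp₂ : σ' y₂ ∈ σ'.support := Equiv.Perm.mem_support.mpr (hmove _ hsy₂x)
  have hGadj : ∀ z : V, z ≠ x → G.Adj z (σ' z) := fun z hz => (hmf z hz).1
  by_cases hsc : σ'.SameCycle (σ' y₁) y₂
  · -- same cycle: split toList σ' (σ' y₁) at y₂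
    have hlN : (σ'.toList (σ' y₁)).Nodup := Equiv.Perm.nodup_toList σ' (σ' y₁)
    have hllen : 2 ≤ (σ'.toList (σ' y₁)).length :=
      Equiv.Perm.two_le_length_toList_iff_mem_support.mpr hsupp₁
    have hlne : σ'.toList (σ' y₁) ≠ [] := by intro h; rw [h] at hllen; simp at hllen
    have hy₂l : y₂ ∈ σ'.toList (σ' y₁) := Equiv.Perm.mem_toList_iff.mpr ⟨hsc, hsupp₁⟩
    obtain ⟨k, hk, hky⟩ := List.getElem_of_mem hy₂l
    have hlasty : (σ'.toList (σ' y₁)).getLast hlne = y₁ :=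
      σ'.injective (myApplyGetLastToList _ hlne)
    have hkne : k ≠ (σ'.toList (σ' y₁)).length - 1 := by
      intro h
      apply hy₁y₂
      have e1 : (σ'.toList (σ' y₁)).getLast hlne = (σ'.toList (σ' y₁))[k] := by
        rw [List.getLast_eq_getElem]
        congr 1
        omega
      rw [← hlasty, e1, hky]
    have hk1 : k + 1 < (σ'.toList (σ' y₁)).length := by omega
    have h₁ne : (σ'.toList (σ' y₁)).take (k + 1) ≠ [] := by
      intro h
      have h2 := congrArg List.length h
      rw [List.length_take] at h2
      simp only [List.length_nil] at h2
      omega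
    have h₂ne : (σ'.toList (σ' y₁)).drop (k + 1) ≠ [] := by
      intro h
      have h2 := congrArg List.length h
      rw [List.length_drop] at h2
      simp only [List.length_nil] at h2
      omega
    have hl₁₂ : (σ'.toList (σ' y₁)).take (k + 1) ++ (σ'.toList (σ' y₁)).drop (k + 1)
        = σ'.toList (σ' y₁) := List.take_append_drop _ _
    have hhead₁ : ((σ'.toList (σ' y₁)).take (k + 1)).head h₁ne = σ' y₁ := by
      rw [List.head_eq_getElem_zero, List.getElem_take]
      simpa using myGetElemToList σ' (σ' y₁) 0 (by omega)
    have hlast₁ : ((σ'.toList (σ' y₁)).take (k + 1)).getLast h₁ne = y₂ := by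
      rw [List.getLast_eq_getElem, ← hky, List.getElem_take]
      congr 1
      rw [List.length_take]
      omega
    have hhead₂ : ((σ'.toList (σ' y₁)).drop (k + 1)).head h₂ne = σ' y₂ := by
      rw [List.head_eq_getElem_zero, List.getElem_drop, ← hky]
      have e1 := myGetElemToList σ' (σ' y₁) (k + 1 + 0) (by omega)
      have e2 := myGetElemToList σ' (σ' y₁) k (by omega)
      rw [e1, e2, Nat.add_zero, pow_succ', Equiv.Perm.mul_apply]
    have hlast₂ : ((σ'.toList (σ' y₁)).drop (k + 1)).getLast h₂ne = y₁ := by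
      have e1 : ((σ'.toList (σ' y₁)).drop (k + 1)).getLast? = (σ'.toList (σ' y₁)).getLast? := by
        conv_rhs => rw [← hl₁₂]
        exact (List.getLast?_append_of_ne_nil _ h₂ne).symm
      rw [List.getLast?_eq_getLast h₂ne, List.getLast?_eq_getLast hlne, hlasty] at e1
      exact Option.some_inj.mp e1
    have hchl : List.Chain' G.Adj (σ'.toList (σ' y₁)) := myChainToList hGadj hfix hsy₁x
    apply myCase2Build G σ σ' hσ x ⟨hfix, hmf⟩ hlt ((σ'.toList (σ' y₁)).take (k + 1))
      ((σ'.toList (σ' y₁)).drop (k + 1)) h₁ne h₂ne ?_ ?_ ?_ (hchl.take _) (hchl.drop _) ?_ ?_ ?_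
    · rw [hl₁₂]; exact hlN
    · rw [hl₁₂]; exact myNotMemToList hfix hsy₁x
    · intro z hz
      rw [hl₁₂] at hz ⊢
      exact myClosedToList _ _ hz
    · rw [hhead₁, hhead₂]; exact hE
    · rw [hlast₁]; exact h2
    · rw [hlast₂]; exact h1.symm
  · -- different cycles
    have hl₁N : (σ'.toList (σ' y₂)).Nodup := Equiv.Perm.nodup_toList σ' (σ' y₂)
    have hl₂N : (σ'.toList (σ' y₁)).Nodup := Equiv.Perm.nodup_toList σ' (σ' y₁)
    have hllen₁ : 2 ≤ (σ'.toList (σ' y₂)).length :=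
      Equiv.Perm.two_le_length_toList_iff_mem_support.mpr hsupp₂
    have hllen₂ : 2 ≤ (σ'.toList (σ' y₁)).length :=
      Equiv.Perm.two_le_length_toList_iff_mem_support.mpr hsupp₁
    have h₁ne : σ'.toList (σ' y₂) ≠ [] := by
      intro h; rw [h] at hllen₁; simp at hllen₁
    have h₂ne : σ'.toList (σ' y₁) ≠ [] := by
      intro h; rw [h] at hllen₂; simp at hllen₂
    have hdisj : List.Disjoint (σ'.toList (σ' y₂)) (σ'.toList (σ' y₁)) := by
      intro z hz₁ hz₂
      rw [Equiv.Perm.mem_toList_iff] at hz₁ hz₂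
      exact hsc (Equiv.Perm.SameCycle.of_apply_right (hz₂.1.trans hz₁.1.symm))
    apply myCase2Build G σ σ' hσ x ⟨hfix, hmf⟩ hlt (σ'.toList (σ' y₂)) (σ'.toList (σ' y₁))
      h₁ne h₂ne (List.Nodup.append hl₁N hl₂N hdisj) ?_ ?_
      (myChainToList hGadj hfix hsy₂x) (myChainToList hGadj hfix hsy₁x) ?_ ?_ ?_
    · rw [List.mem_append]
      rintro (h | h)
      · exact myNotMemToList hfix hsy₂x h
      · exact myNotMemToList hfix hsy₁x h
    · intro z hz
      rw [List.mem_append] at hz ⊢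
      rcases hz with h | h
      · exact Or.inl (myClosedToList _ _ h)
      · exact Or.inr (myClosedToList _ _ h)
    · rw [myHeadToList _ h₁ne, myHeadToList _ h₂ne]
      exact hE.symm
    · have e : (σ'.toList (σ' y₂)).getLast h₁ne = y₂ := σ'.injective (myApplyGetLastToList _ h₁ne)
      rw [e]; exact h2
    · have e : (σ'.toList (σ' y₁)).getLast h₂ne = y₁ := σ'.injective (myApplyGetLastToList _ h₂ne)
      rw [e]; exact h1.symm


theorem stmt15 {V : Type*} [Fintype V] (G : SimpleGraph V) (σ : Equiv.Perm V)
    (hσ : IsMinTwoFactor G σ) (x : V) (σ' : Equiv.Perm V)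
    (h' : IsTwoFactorAvoiding G x σ') (hlt : numCycles σ' < numCycles σ) :
    _root_.IsIndepSet G ({x} ∪ (fun y => σ' y) '' (G.neighborSet x)) := by
  classical
  intro u hu v hv huv
  simp only [Set.mem_union, Set.mem_singleton_iff, Set.mem_image,
    SimpleGraph.mem_neighborSet] at hu hv
  rcases hu with rfl | ⟨y₁, hy₁, rfl⟩
  · rcases hv with rfl | ⟨y₂, hy₂, rfl⟩
    · exact G.irrefl huv
    · exact myCase1 G σ σ' hσ u h' hlt y₂ hy₂ huv
  · rcases hv with rfl | ⟨y₂, hy₂, rfl⟩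
    · exact myCase1 G σ σ' hσ v h' hlt y₁ hy₁ huv.symm
    · exact myCase2 G σ σ' hσ x h' hlt y₁ y₂ hy₁ hy₂ huv
end
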